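/- Let A be a commutative ℚ-algebra and φ a ring endomorphism of A with φ^i = φ^j for some 1 ≤ i < j. Then M = (1−φ)(A) is a Mathieu–Zhao space of A: for every a with a^m ∈ M for all large m, and every b ∈ A, one has b·a^m ∈ M for all sufficiently large m. -/

import Mathlib

private lemma stmt6_esymm_zero (A : Type*) [CommRing A] [Algebra ℚ A] (n : ℕ) (y : Fin n → A)
    (h : ∀ m, 1 ≤ m → ∑ t, y t ^ m = 0) (k : ℕ) (hk : 1 ≤ k) :
    (Finset.univ.val.map y).esymm k = 0 := by
  have newton := congrArg (MvPolynomial.aeval y) (MvPolynomial.mul_esymm_eq_sum (Fin n) ℚ k)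
  simp only [map_mul, map_sum, map_natCast, map_pow, map_neg, map_one,
    MvPolynomial.aeval_esymm_eq_multiset_esymm, MvPolynomial.psum, MvPolynomial.aeval_X] at newton
  have hz : ∀ a ∈ Finset.HasAntidiagonal.antidiagonal k |>.filter (fun a => a.1 < k),
      (-1:A) ^ a.1 * (Finset.univ.val.map y).esymm a.1 * ∑ t, y t ^ a.2 = 0 := by
    intro a ha
    simp only [Finset.mem_filter, Finset.HasAntidiagonal.mem_antidiagonal] at ha
    rw [h a.2 (by omega), mul_zero]
  rw [Finset.sum_congr rfl hz, Finset.sum_const, smul_zero, mul_zero] at newton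
  have hku : IsUnit ((k : ℕ) : A) := by
    have := IsUnit.map (algebraMap ℚ A)
      (isUnit_iff_ne_zero.mpr (by exact_mod_cast (by omega : k ≠ 0) : (k:ℚ) ≠ 0))
    simpa using this
  exact (hku.mul_right_eq_zero).mp newton

private lemma stmt6_nilpotent (A : Type*) [CommRing A] [Algebra ℚ A] (n : ℕ) (y : Fin n → A)
    (h : ∀ m, 1 ≤ m → ∑ t, y t ^ m = 0) (s : Fin n) :
    y s ^ n = 0 := by
  classical
  have hE := stmt6_esymm_zero A n y h
  set ms : Multiset A := Finset.univ.val.map y with hms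
  have hcard : Multiset.card ms = n := by simp [hms]
  have h1 := congrArg (Polynomial.eval (y s)) (Multiset.prod_X_sub_X_eq_sum_esymm ms)
  rw [Polynomial.eval_multiset_prod] at h1
  have h0 : (0:A) ∈ Multiset.map (fun p => Polynomial.eval (y s) p)
      (Multiset.map (fun t => Polynomial.X - Polynomial.C t) ms) := by
    rw [Multiset.map_map]
    refine Multiset.mem_map.mpr
      ⟨y s, Multiset.mem_map_of_mem _ (Finset.mem_val.mpr (Finset.mem_univ s)), by simp⟩
  rw [Multiset.prod_eq_zero h0] at h1
  rw [hcard] at h1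
  rw [Finset.sum_range_succ'] at h1
  simp only [Polynomial.eval_finset_sum, Polynomial.eval_add, Polynomial.eval_mul,
    Polynomial.eval_pow, Polynomial.eval_neg, Polynomial.eval_one, Polynomial.eval_C,
    Polynomial.eval_X] at h1
  have hz : ∀ x ∈ Finset.range n, ((-1:A)) ^ (x+1) * (ms.esymm (x+1) * y s ^ (n - (x+1))) = 0 := by
    intro x hx; rw [hE (x+1) (by omega)]; ring
  rw [Finset.sum_congr rfl hz, Finset.sum_const, smul_zero, zero_add] at h1
  simpa [Multiset.esymm] using h1.symm

theorem stmt6 (A : Type*) [CommRing A] [Algebra ℚ A] (φ : A →+* A)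
    (i j : ℕ) (hi : 1 ≤ i) (hij : i < j) (hφ : φ ^ i = φ ^ j)
    (M : Set A) (hM : M = Set.range (fun a => a - φ a)) :
    ∀ a : A, (∃ N : ℕ, ∀ m ≥ N, a ^ m ∈ M) →
      ∀ b : A, ∃ N : ℕ, ∀ m ≥ N, b * a ^ m ∈ M := by
  subst hM
  rintro a ⟨N, hN⟩ b
  set d := j - i with hd
  have hd1 : 1 ≤ d := by omega
  have hsucc : ∀ (s : ℕ) (z : A), (φ ^ (s+1)) z = (φ ^ s) (φ z) := by
    intro s z
    rw [pow_succ]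
    rfl
  have hsucc' : ∀ (s : ℕ) (z : A), (φ ^ (s+1)) z = φ ((φ ^ s) z) := by
    intro s z
    rw [pow_succ']
    rfl
  -- Step 1: power sums vanish
  have hS : ∀ m, N ≤ m → ∑ t ∈ Finset.range d, (φ ^ (i+t)) (a ^ m) = 0 := by
    intro m hm
    obtain ⟨c, hc⟩ := hN m hm
    simp only at hc
    have hterm : ∀ t, (φ ^ (i+t)) (a ^ m) =
        (fun s => (φ ^ (i+s)) c) t - (fun s => (φ ^ (i+s)) c) (t+1) := by
      intro t
      rw [← hc]
      show (φ ^ (i+t)) (c - φ c) = _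
      rw [map_sub]
      show _ = (φ ^ (i+t)) c - (φ ^ (i+(t+1))) c
      rw [show i + (t+1) = (i+t)+1 by ring, hsucc]
    calc ∑ t ∈ Finset.range d, (φ ^ (i+t)) (a ^ m)
        = ∑ t ∈ Finset.range d,
            ((fun s => (φ ^ (i+s)) c) t - (fun s => (φ ^ (i+s)) c) (t+1)) :=
          Finset.sum_congr rfl (fun t _ => hterm t)
      _ = (φ ^ (i+0)) c - (φ ^ (i+d)) c := Finset.sum_range_sub' _ d
      _ = 0 := by rw [show i + d = j by omega, add_zero, hφ, sub_self]
  -- Step 2: nilpotency of x t = (φ^(i+t)) a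
  set N' := max N 1 with hN'
  have hnil : ∀ t, t < d → ((φ ^ (i+t)) a) ^ (N' * d) = 0 := by
    intro t ht
    have key := stmt6_nilpotent A d (fun t : Fin d => ((φ ^ (i+t.val)) a) ^ N') ?_ ⟨t, ht⟩
    · rw [← pow_mul] at key
      exact key
    · intro m hm
      have h1 : N ≤ N' * m := le_trans (le_max_left _ _) (Nat.le_mul_of_pos_right _ (by omega))
      have := hS (N' * m) h1
      rw [← this, ← Fin.sum_univ_eq_sum_range (fun t => (φ ^ (i+t)) (a ^ (N' * m)))]
      refine Finset.sum_congr rfl (fun u _ => ?_)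
      rw [← pow_mul]
      simp [map_pow]
  -- Step 3: conclusion
  refine ⟨N' * d, fun m hm => ?_⟩
  set y : A := b * a ^ m with hy
  have hSy : ∑ t ∈ Finset.range d, (φ ^ (i+t)) y = 0 := by
    refine Finset.sum_eq_zero (fun t ht => ?_)
    rw [hy, map_mul, map_pow]
    have hzz : ((φ ^ (i+t)) a) ^ m = 0 := by
      have : ((φ ^ (i+t)) a) ^ m = ((φ ^ (i+t)) a) ^ (N' * d) * ((φ ^ (i+t)) a) ^ (m - N' * d) := by
        rw [← pow_add]; congr 1; omega
      rw [this, hnil t (Finset.mem_range.mp ht), zero_mul]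
    rw [hzz, mul_zero]
  -- witness
  refine ⟨(d:ℚ)⁻¹ • ∑ t ∈ Finset.range d, ∑ s ∈ Finset.range (i+t), (φ ^ s) y, ?_⟩
  simp only
  have hφsmul : ∀ (q : ℚ) (z : A), φ (q • z) = q • φ z := fun q z => map_rat_smul φ q z
  rw [hφsmul, map_sum, ← smul_sub, ← Finset.sum_sub_distrib]
  have hrow : ∀ t, (∑ s ∈ Finset.range (i+t), (φ ^ s) y) -
      φ (∑ s ∈ Finset.range (i+t), (φ ^ s) y) = y - (φ ^ (i+t)) y := by
    intro t
    rw [map_sum, ← Finset.sum_sub_distrib]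
    have : ∀ s ∈ Finset.range (i+t), (φ ^ s) y - φ ((φ ^ s) y) =
        (fun u => (φ ^ u) y) s - (fun u => (φ ^ u) y) (s+1) := by
      intro s _
      simp only
      rw [hsucc']
    rw [Finset.sum_congr rfl this, Finset.sum_range_sub' (fun u => (φ ^ u) y) (i+t)]
    simp
  rw [Finset.sum_congr rfl (fun t _ => hrow t), Finset.sum_sub_distrib, hSy, sub_zero,
    Finset.sum_const, Finset.card_range]
  rw [← Nat.cast_smul_eq_nsmul ℚ, smul_smul, inv_mul_cancel₀ (by exact_mod_cast (by omega : d ≠ 0)),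
    one_smul]
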